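/- arXiv:2308.02610 — 5 statements merged into one kernel-verified Lean document; each statement's English description precedes it below -/
import Mathlib

section
/- Let A be an m×n integer matrix, let r be the rank of A (as a matrix over ℚ), and let M = ℤⁿ/U, where U ⊆ ℤⁿ is the subgroup generated by the rows of A. Then the torsion subgroup T of M is a finite group, and the exponent of T divides the determinant of every r×r submatrix of A whose determinant is non-zero. In particular, the exponent of T is bounded by the absolute value of any non-zero maximal-rank minor of A. -/
open Matrix Submodule

/-- Key lemma: if the rational vector corresponding to `x` lies in the `ℚ`-row space of `A`,
then `d • x` lies in the `ℤ`-row span, where `d` is a nonzero `r × r` minor. -/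
lemma key_smul_mem (m n r : ℕ) (A : Matrix (Fin m) (Fin n) ℤ)
    (hr : (A.map ((↑) : ℤ → ℚ)).rank = r)
    (rows : Fin r → Fin m) (cols : Fin r → Fin n)
    (hd : (A.submatrix rows cols).det ≠ 0) (x : Fin n → ℤ)
    (hx : (fun j => (x j : ℚ)) ∈ Submodule.span ℚ (Set.range (A.map ((↑) : ℤ → ℚ)))) :
    (A.submatrix rows cols).det • x ∈ Submodule.span ℤ (Set.range A) := by
  classical
  set Q : Matrix (Fin m) (Fin n) ℚ := A.map ((↑) : ℤ → ℚ) with hQ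
  set d : ℤ := (A.submatrix rows cols).det with hdd
  set B : Matrix (Fin r) (Fin r) ℚ := Q.submatrix rows cols with hB
  have hBmap : B = (A.submatrix rows cols).map (Int.castRingHom ℚ) := rfl
  have hdetB : B.det = (d : ℚ) := by
    have := RingHom.map_det (Int.castRingHom ℚ) (A.submatrix rows cols)
    rw [hBmap]
    simp only [RingHom.mapMatrix_apply] at this
    exact this.symm
  have hdetB0 : B.det ≠ 0 := by
    rw [hdetB]; exact_mod_cast hd
  -- rows i of Q are linearly independent
  have li : LinearIndependent ℚ (fun i => Q (rows i)) := by
    have liB : LinearIndependent ℚ (fun i => B i) :=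
      Matrix.linearIndependent_rows_iff_isUnit.2
        ((Matrix.isUnit_iff_isUnit_det B).2 hdetB0.isUnit)
    exact LinearIndependent.of_comp (LinearMap.funLeft ℚ ℚ cols) liB
  -- they span the row space S
  set S : Submodule ℚ (Fin n → ℚ) := Submodule.span ℚ (Set.range Q) with hS
  have hfinrank : Module.finrank ℚ S = r := by
    rw [← hr, Matrix.rank_eq_finrank_span_row]
    rfl
  have hmemS : ∀ i, Q (rows i) ∈ S := fun i => subset_span ⟨rows i, rfl⟩
  set g : Fin r → S := fun i => ⟨Q (rows i), hmemS i⟩ with hg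
  have lig : LinearIndependent ℚ g := LinearIndependent.of_comp S.subtype li
  have htop : Submodule.span ℚ (Set.range g) = ⊤ :=
    lig.span_eq_top_of_card_eq_finrank' (by simp [hfinrank])
  have hspan : Submodule.span ℚ (Set.range (fun i => Q (rows i))) = S := by
    have := congrArg (Submodule.map S.subtype) htop
    rwa [Submodule.map_top, Submodule.range_subtype, Submodule.map_span,
      ← Set.range_comp] at this
  have hx2 : (fun j => (x j : ℚ)) ∈ Submodule.span ℚ (Set.range (fun i => Q (rows i))) := by
    rw [hspan]; exact hx
  obtain ⟨c, hc⟩ := (mem_span_range_iff_exists_fun ℚ).1 hx2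
  -- Cramer: c ᵥ* B equals x restricted to cols
  have hvec : c ᵥ* B = fun j => (x (cols j) : ℚ) := by
    funext j
    have := congrFun hc (cols j)
    simpa [Matrix.vecMul, dotProduct, Finset.sum_apply, hB] using this
  -- multiply by adjugate
  have hadj : (fun j => (x (cols j) : ℚ)) ᵥ* B.adjugate = (d : ℚ) • c := by
    rw [← hvec, Matrix.vecMul_vecMul, Matrix.mul_adjugate, hdetB]
    funext i
    simp [Matrix.vecMul, dotProduct, Matrix.smul_apply, Matrix.one_apply,
      mul_comm]
  -- integer coefficients
  set c' : Fin r → ℤ := (fun j => x (cols j)) ᵥ* (A.submatrix rows cols).adjugate with hc'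
  have hcast : ∀ i, (c' i : ℚ) = (d : ℚ) * c i := by
    intro i
    have h1 : ((Int.castRingHom ℚ) (c' i)) =
        (((Int.castRingHom ℚ) ∘ fun j => x (cols j)) ᵥ*
          ((A.submatrix rows cols).adjugate.map (Int.castRingHom ℚ))) i :=
      RingHom.map_vecMul _ _ _ i
    have h3 : (A.submatrix rows cols).adjugate.map ⇑(Int.castRingHom ℚ) = B.adjugate := by
      rw [hBmap]
      have := RingHom.map_adjugate (Int.castRingHom ℚ) (A.submatrix rows cols)
      simpa [RingHom.mapMatrix_apply] using this
    rw [h3] at h1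
    have h2 := congrFun hadj i
    -- h1 already in usable form
    rw [show ((Int.castRingHom ℚ) (c' i) : ℚ) = (c' i : ℚ) from rfl] at h1
    rw [h1]
    simpa [Function.comp_def] using h2
  -- final identity over ℤ
  have hfinal : d • x = ∑ i, c' i • A (rows i) := by
    funext j
    apply Int.cast_injective (α := ℚ)
    simp only [Pi.smul_apply, smul_eq_mul, Finset.sum_apply]
    push_cast
    have hcj := congrFun hc j
    simp only [Finset.sum_apply, Pi.smul_apply, smul_eq_mul] at hcj
    calc ((d : ℚ)) * (x j : ℚ) = (d : ℚ) * ∑ i, c i * Q (rows i) j := by rw [hcj]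
      _ = ∑ i, (d : ℚ) * c i * Q (rows i) j := by rw [Finset.mul_sum]; ring_nf
      _ = ∑ i, (c' i : ℚ) * (A (rows i) j : ℚ) := by
          refine Finset.sum_congr rfl fun i _ => ?_
          rw [hcast i]; rfl
  rw [hfinal]
  exact Submodule.sum_mem _ fun i _ =>
    Submodule.smul_mem _ _ (subset_span ⟨rows i, rfl⟩)

/-- For an `m × n` integer matrix `A` of rank `r` (over `ℚ`), with
`M = ℤⁿ / (row span of A)`, the torsion subgroup `T` of `M` is finite and its exponent
divides every non-zero `r × r` minor of `A`. -/
theorem torsion_exponent_dvd_minor (m n r : ℕ) (A : Matrix (Fin m) (Fin n) ℤ)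
    (hr : (A.map ((↑) : ℤ → ℚ)).rank = r) :
    Finite ↥(Submodule.torsion ℤ ((Fin n → ℤ) ⧸ Submodule.span ℤ (Set.range A))) ∧
    ∀ (rows : Fin r → Fin m) (cols : Fin r → Fin n),
      (A.submatrix rows cols).det ≠ 0 →
      ((AddMonoid.exponent
          ↥(Submodule.torsion ℤ ((Fin n → ℤ) ⧸ Submodule.span ℤ (Set.range A)))) : ℤ) ∣
        (A.submatrix rows cols).det := by
  classical
  set U : Submodule ℤ (Fin n → ℤ) := Submodule.span ℤ (Set.range A) with hU
  set M := (Fin n → ℤ) ⧸ U with hM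
  set T := Submodule.torsion ℤ M with hT
  -- every torsion element, lifted, has rational vector in the row space
  have hlift : ∀ t : T, ∀ x : Fin n → ℤ, Submodule.Quotient.mk x = (t : M) →
      (fun j => (x j : ℚ)) ∈ Submodule.span ℚ (Set.range (A.map ((↑) : ℤ → ℚ))) := by
    rintro t x hxt
    obtain ⟨a, ha⟩ := (Submodule.mem_torsion_iff (t : M)).1 t.2
    have ha0 : (a : ℤ) ≠ 0 := nonZeroDivisors.coe_ne_zero a
    have hmem : (a : ℤ) • x ∈ U := by
      rw [← Submodule.Quotient.mk_eq_zero, Submodule.Quotient.mk_smul, hxt]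
      exact ha
    obtain ⟨e, he⟩ := (mem_span_range_iff_exists_fun ℤ).1 hmem
    have key : (fun j => (x j : ℚ)) = ∑ i, ((e i : ℚ) / (a : ℚ)) • (A.map ((↑) : ℤ → ℚ)) i := by
      funext j
      have hj := congrFun he j
      simp only [Finset.sum_apply, Pi.smul_apply, smul_eq_mul] at hj ⊢
      have hj' : (∑ i, (e i : ℚ) * (A i j : ℚ)) = (a : ℚ) * (x j : ℚ) := by
        exact_mod_cast hj
      have ha0' : (a : ℚ) ≠ 0 := Int.cast_ne_zero.2 ha0
      simp only [Matrix.map_apply]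
      calc (x j : ℚ) = ((a : ℚ) * (x j : ℚ)) / (a : ℚ) := by field_simp
        _ = (∑ i, (e i : ℚ) * (A i j : ℚ)) / (a : ℚ) := by rw [hj']
        _ = ∑ i, (e i : ℚ) / (a : ℚ) * (A i j : ℚ) := by
            rw [Finset.sum_div]
            exact Finset.sum_congr rfl fun i _ => (div_mul_eq_mul_div _ _ _).symm
    rw [key]
    exact Submodule.sum_mem _ fun i _ =>
      Submodule.smul_mem _ _ (Submodule.subset_span ⟨i, rfl⟩)
  have hkill : ∀ (rows : Fin r → Fin m) (cols : Fin r → Fin n),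
      (A.submatrix rows cols).det ≠ 0 → ∀ t : T, (A.submatrix rows cols).det • (t : M) = 0 := by
    intro rows cols hd t
    obtain ⟨x, hx⟩ := Submodule.Quotient.mk_surjective U (t : M)
    have hmem := key_smul_mem m n r A hr rows cols hd x (hlift t x hx)
    rw [← hx, ← Submodule.Quotient.mk_smul, Submodule.Quotient.mk_eq_zero]
    exact hmem
  constructor
  · -- finiteness
    have : Module.Finite ℤ T := by infer_instance
    exact Module.finite_of_fg_torsion T (Submodule.torsion_isTorsion)
  · intro rows cols hd
    set d : ℤ := (A.submatrix rows cols).det with hdd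
    have hsmul : ∀ t : T, d.natAbs • t = 0 := by
      intro t
      have h0 : d • (t : M) = 0 := hkill rows cols hd t
      have h1 : (d.natAbs : ℤ) • (t : M) = 0 := by
        rcases Int.natAbs_eq d with h | h
        · rw [← h]; exact h0
        · rw [h, neg_smul] at h0
          simpa using neg_eq_zero.1 h0
      apply Subtype.ext
      have : ((d.natAbs • t : T) : M) = d.natAbs • (t : M) := rfl
      rw [this]
      simpa using h1
    have hdvd : AddMonoid.exponent T ∣ d.natAbs :=
      AddMonoid.exponent_dvd_of_forall_nsmul_eq_zero hsmul
    have : ((AddMonoid.exponent T : ℤ)) ∣ (d.natAbs : ℤ) := Int.ofNat_dvd.2 hdvd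
    exact this.trans (Int.natAbs_dvd.2 dvd_rfl)
end

section
/- Let A be a non-zero m×n integer matrix and set ‖A‖ = max{|a_{ij}|} over all entries of A. Let M = ℤⁿ/U, where U ⊆ ℤⁿ is the subgroup generated by the rows of A, and let τ be the exponent of the torsion subgroup of M. Then τ ≤ n^{n/2}·‖A‖ⁿ; consequently the bit size log₂(τ) of the torsion exponent is bounded by n·log₂(n·‖A‖). -/
open Finset in
/-- Hadamard's inequality, crude form: a real `r × r` matrix with entries bounded by `x`
has determinant bounded by `(√r * x)^r`. -/
private lemma hadamard_det_bound {r : ℕ} (M : Matrix (Fin r) (Fin r) ℝ) {x : ℝ} (hx0 : 0 ≤ x)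
    (hx : ∀ i j, |M i j| ≤ x) : |M.det| ≤ (Real.sqrt r * x) ^ r := by
  rcases Nat.eq_zero_or_pos r with rfl | hr
  · simp [Matrix.det_fin_zero]
  obtain ⟨s, rfl⟩ := Nat.exists_eq_succ_of_ne_zero hr.ne'
  let f : Fin (s + 1) → EuclideanSpace ℝ (Fin (s + 1)) := fun i => show EuclideanSpace ℝ (Fin (s + 1)) from WithLp.toLp 2 (M i)
  have hcard : Module.finrank ℝ (EuclideanSpace ℝ (Fin (s + 1))) = Fintype.card (Fin (s + 1)) := by
    simp [finrank_euclideanSpace]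
  letI : WellFoundedLT (Fin (s + 1)) := inferInstance
  let g := InnerProductSpace.gramSchmidtOrthonormalBasis hcard f
  have hdet : g.toBasis.det f = ∏ i, inner ℝ (g i) (f i) :=
    InnerProductSpace.gramSchmidtOrthonormalBasis_det hcard f
  -- each factor bounded
  have hfactor : ∀ i, |(inner ℝ (g i) (f i) : ℝ)| ≤ Real.sqrt (s + 1) * x := by
    intro i
    have h1 : |(inner ℝ (g i) (f i) : ℝ)| ≤ ‖g i‖ * ‖f i‖ := abs_real_inner_le_norm _ _
    have h2 : ‖g i‖ = 1 := g.orthonormal.1 i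
    have h3 : ‖f i‖ ≤ Real.sqrt (s + 1) * x := by
      rw [EuclideanSpace.norm_eq]
      have : ∑ j, ‖(f i) j‖ ^ 2 ≤ ∑ _j : Fin (s + 1), x ^ 2 := by
        refine Finset.sum_le_sum fun j _ => ?_
        have : ‖(f i) j‖ = |M i j| := rfl
        rw [this, sq_abs, ← sq_abs]
        exact pow_le_pow_left₀ (abs_nonneg _) (hx i j) 2
      calc Real.sqrt (∑ j, ‖(f i) j‖ ^ 2) ≤ Real.sqrt ((s + 1 : ℕ) * x ^ 2) := by
            apply Real.sqrt_le_sqrt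
            simpa using this
        _ = Real.sqrt (s + 1) * x := by
            rw [Real.sqrt_mul (by positivity), Real.sqrt_sq hx0]
            norm_num
    calc |(inner ℝ (g i) (f i) : ℝ)| ≤ ‖g i‖ * ‖f i‖ := h1
      _ = ‖f i‖ := by rw [h2, one_mul]
      _ ≤ Real.sqrt (s + 1) * x := h3
  -- relate to matrix determinant
  let e := EuclideanSpace.basisFun (Fin (s + 1)) ℝ
  have hMe : e.toBasis.det f = M.det := by
    rw [Module.Basis.det_apply]
    have : e.toBasis.toMatrix f = M.transpose := by
      ext i j
      rw [Module.Basis.toMatrix_apply]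
      simp only [Matrix.transpose_apply]
      rfl
    rw [this, Matrix.det_transpose]
  have hsplit : e.toBasis.det f = e.toBasis.det g.toBasis * g.toBasis.det f := by
    rw [Module.Basis.det_apply, Module.Basis.det_apply, Module.Basis.det_apply, ← Matrix.det_mul,
      Module.Basis.toMatrix_mul_toMatrix]
  have habs1 : |e.toBasis.det ⇑g.toBasis| = 1 := by
    rcases e.det_to_matrix_orthonormalBasis_real g with h | h <;>
      simp_all [OrthonormalBasis.coe_toBasis]
  have : |M.det| = |g.toBasis.det f| := by
    rw [← hMe, hsplit, abs_mul, habs1, one_mul]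
  rw [this, hdet]
  calc |∏ i, (inner ℝ (g i) (f i) : ℝ)| = ∏ i, |(inner ℝ (g i) (f i) : ℝ)| := by
        rw [Finset.abs_prod]
    _ ≤ ∏ _i : Fin (s + 1), Real.sqrt (s + 1) * x :=
        Finset.prod_le_prod (fun i _ => abs_nonneg _) (fun i _ => hfactor i)
    _ = (Real.sqrt (s + 1) * x) ^ (s + 1) := by rw [Finset.prod_const, Finset.card_univ,
        Fintype.card_fin]
    _ = (Real.sqrt ((s + 1 : ℕ)) * x) ^ ((s + 1 : ℕ)) := by push_cast; ring

private lemma annihilate {m n r : ℕ} (A : Matrix (Fin m) (Fin n) ℤ)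
    (σ : Fin r → Fin m) (ρ : Fin r → Fin n)
    (hspan : ∀ i : Fin m, (fun j => (A i j : ℚ)) ∈
      Submodule.span ℚ (Set.range fun t : Fin r => fun j => (A (σ t) j : ℚ)))
    (x : Fin n → ℤ) (k : ℤ) (hk : k ≠ 0)
    (hkx : k • x ∈ Submodule.span ℤ (Set.range A)) :
    (A.submatrix σ ρ).det • x ∈ Submodule.span ℤ (Set.range A) := by
  classical
  set C : Matrix (Fin r) (Fin r) ℤ := A.submatrix σ ρ with hC
  set Cq : Matrix (Fin r) (Fin r) ℚ := C.map (Int.cast : ℤ → ℚ) with hCq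
  have hkQ : (k : ℚ) ≠ 0 := Int.cast_ne_zero.mpr hk
  -- write k • x as an integer combination of rows of A
  obtain ⟨c, hc⟩ := (Submodule.mem_span_range_iff_exists_fun ℤ).mp hkx
  have hcj : ∀ j, (k : ℚ) * (x j : ℚ) = ∑ i, (c i : ℚ) * (A i j : ℚ) := by
    intro j
    have h0 : ∑ i, c i * A i j = k * x j := by
      simpa [Finset.sum_apply, Pi.smul_apply, smul_eq_mul] using congrFun hc j
    exact_mod_cast h0.symm
  -- x over ℚ lies in the span of the selected rows
  have hxQ : (fun j => (x j : ℚ)) ∈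
      Submodule.span ℚ (Set.range fun t : Fin r => fun j => (A (σ t) j : ℚ)) := by
    have hx_eq : (fun j => (x j : ℚ)) = ∑ i, ((c i : ℚ) / (k : ℚ)) • (fun j => (A i j : ℚ)) := by
      funext j
      rw [Finset.sum_apply]
      simp only [Pi.smul_apply, smul_eq_mul]
      have h2 : ∑ i, (c i : ℚ) / (k : ℚ) * (A i j : ℚ)
          = (∑ i, (c i : ℚ) * (A i j : ℚ)) / (k : ℚ) := by
        rw [Finset.sum_div]
        exact Finset.sum_congr rfl fun i _ => by ring
      rw [h2, ← hcj j, mul_comm, mul_div_assoc, div_self hkQ, mul_one]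
    rw [hx_eq]
    exact Submodule.sum_mem _ fun i _ => Submodule.smul_mem _ _ (hspan i)
  obtain ⟨q, hq⟩ := (Submodule.mem_span_range_iff_exists_fun ℚ).mp hxQ
  have hqj : ∀ j, (x j : ℚ) = ∑ t, q t * (A (σ t) j : ℚ) := by
    intro j
    have := congrFun hq j
    simpa [Finset.sum_apply, Pi.smul_apply, smul_eq_mul] using this.symm
  -- integer coefficients via the adjugate
  set c' : Fin r → ℤ := fun t => ∑ l, x (ρ l) * C.adjugate l t with hc'
  have hadj : Cq.adjugate = C.adjugate.map (Int.cast : ℤ → ℚ) :=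
    (RingHom.map_adjugate (Int.castRingHom ℚ) C).symm
  have hdetq : Cq.det = (C.det : ℚ) :=
    (RingHom.map_det (Int.castRingHom ℚ) C).symm
  have hc'q : ∀ t, (c' t : ℚ) = (C.det : ℚ) * q t := by
    intro t
    have step1 : (c' t : ℚ) = ∑ l, (x (ρ l) : ℚ) * Cq.adjugate l t := by
      rw [hc', hadj]
      push_cast
      simp [Matrix.map_apply]
    have step2 : ∀ l, (x (ρ l) : ℚ) = ∑ t', q t' * Cq t' l := by
      intro l
      rw [hqj (ρ l)]
      simp [hCq, hC, Matrix.map_apply, Matrix.submatrix_apply]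
    rw [step1]
    calc ∑ l, (x (ρ l) : ℚ) * Cq.adjugate l t
        = ∑ l, (∑ t', q t' * Cq t' l) * Cq.adjugate l t := by
          exact Finset.sum_congr rfl fun l _ => by rw [step2 l]
      _ = ∑ l, ∑ t', q t' * Cq t' l * Cq.adjugate l t := by
          exact Finset.sum_congr rfl fun l _ => by rw [Finset.sum_mul]
      _ = ∑ t', ∑ l, q t' * Cq t' l * Cq.adjugate l t := Finset.sum_comm
      _ = ∑ t', q t' * ∑ l, Cq t' l * Cq.adjugate l t := by
          refine Finset.sum_congr rfl fun t' _ => ?_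
          rw [Finset.mul_sum]
          exact Finset.sum_congr rfl fun l _ => by ring
      _ = ∑ t', q t' * (Cq * Cq.adjugate) t' t := by
          exact Finset.sum_congr rfl fun t' _ => by rw [Matrix.mul_apply]
      _ = ∑ t', q t' * ((Cq.det • (1 : Matrix (Fin r) (Fin r) ℚ)) t' t) := by
          rw [Matrix.mul_adjugate]
      _ = (C.det : ℚ) * q t := by
          simp only [Matrix.smul_apply, Matrix.one_apply, smul_eq_mul, mul_ite, mul_one,
            mul_zero]
          rw [Finset.sum_ite_eq' Finset.univ t (fun t' => q t' * Cq.det)]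
          simp [hdetq, mul_comm]
  -- the key identity over ℤ
  have hkey : C.det • x = ∑ t, c' t • A (σ t) := by
    funext j
    have : ((C.det • x) j : ℚ) = ((∑ t, c' t • A (σ t)) j : ℚ) := by
      simp only [Pi.smul_apply, smul_eq_mul, Finset.sum_apply]
      push_cast
      rw [Finset.sum_congr rfl (fun t _ => by rw [hc'q t])]
      rw [hqj j, Finset.mul_sum]
      exact Finset.sum_congr rfl fun t _ => by
        have h := hdetq; simp only [hCq] at h; rw [h]; ring
    exact_mod_cast this
  rw [hkey]
  exact Submodule.sum_mem _ fun t _ =>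
    Submodule.smul_mem _ _ (Submodule.subset_span ⟨σ t, rfl⟩)

private lemma exists_minor {m n : ℕ} (A : Matrix (Fin m) (Fin n) ℤ) (hA : A ≠ 0) :
    ∃ (r : ℕ) (σ : Fin r → Fin m) (ρ : Fin r → Fin n), r ≤ n ∧
      (A.submatrix σ ρ).det ≠ 0 ∧
      ∀ i : Fin m, (fun j => (A i j : ℚ)) ∈
        Submodule.span ℚ (Set.range fun t : Fin r => fun j => (A (σ t) j : ℚ)) := by
  classical
  set Aq : Fin m → (Fin n → ℚ) := fun i j => (A i j : ℚ) with hAq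
  obtain ⟨b, hb_sub, hb_span, hb_ind⟩ := exists_linearIndependent ℚ (Set.range Aq)
  haveI : Fintype b := (hb_ind.setFinite).fintype
  set r := Fintype.card b with hr
  let eb : Fin r ≃ b := (Fintype.equivFin b).symm
  set v : Fin r → (Fin n → ℚ) := fun t => ((eb t : b) : Fin n → ℚ) with hv
  have hv_ind : LinearIndependent ℚ v := hb_ind.comp eb eb.injective
  have hv_range : Set.range v = b := by
    rw [hv]
    ext y
    constructor
    · rintro ⟨t, rfl⟩; exact (eb t).2
    · intro hy; exact ⟨eb.symm ⟨y, hy⟩, by simp⟩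
  -- choose row indices
  have hmem : ∀ t, ∃ i, Aq i = v t := fun t => hb_sub (eb t).2
  choose σ hσ using hmem
  have hvσ : v = fun t => Aq (σ t) := by funext t; rw [hσ t]
  -- the span property
  have hspan : ∀ i : Fin m, (fun j => (A i j : ℚ)) ∈
      Submodule.span ℚ (Set.range fun t : Fin r => fun j => (A (σ t) j : ℚ)) := by
    intro i
    have h1 : (Set.range fun t : Fin r => fun j => (A (σ t) j : ℚ)) = Set.range v := by
      rw [hvσ]
    rw [h1, hv_range, hb_span]
    exact Submodule.subset_span ⟨i, rfl⟩
  -- r ≤ n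
  have hrn : r ≤ n := by
    have := hv_ind.fintype_card_le_finrank
    simpa [Module.finrank_fin_fun] using this
  -- column selection
  set Bq : Matrix (Fin r) (Fin n) ℚ := Matrix.of v with hBq
  have hBrank : Bq.rank = r := by
    rw [Matrix.rank_eq_finrank_span_row]
    have : Set.range Bq.row = Set.range v := rfl
    rw [this, finrank_span_eq_card hv_ind, Fintype.card_fin]
  have hTrank : Bq.transpose.rank = r := by rw [Matrix.rank_transpose]; exact hBrank
  have hTspan : Submodule.span ℚ (Set.range Bq.transpose) = ⊤ := by
    apply Submodule.eq_top_of_finrank_eq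
    rw [show Set.range Bq.transpose = Set.range Bq.transpose.row from rfl,
      ← Matrix.rank_eq_finrank_span_row, hTrank, Module.finrank_fin_fun]
  obtain ⟨b2, hb2_sub, hb2_span, hb2_ind⟩ := exists_linearIndependent ℚ (Set.range Bq.transpose)
  haveI : Fintype b2 := (hb2_ind.setFinite).fintype
  have hcard2 : Fintype.card b2 = r := by
    have h1 : Module.finrank ℚ (Submodule.span ℚ b2) = b2.toFinset.card :=
      finrank_span_set_eq_card hb2_ind
    rw [hb2_span, hTspan] at h1
    rw [← Set.toFinset_card, ← h1, finrank_top, Module.finrank_fin_fun]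
  let e2 : Fin r ≃ b2 := (Fintype.equivFinOfCardEq hcard2).symm
  set w : Fin r → (Fin r → ℚ) := fun t => ((e2 t : b2) : Fin r → ℚ) with hw
  have hw_ind : LinearIndependent ℚ w := hb2_ind.comp e2 e2.injective
  have hmem2 : ∀ t, ∃ j, Bq.transpose j = w t := fun t => hb2_sub (e2 t).2
  choose ρ hρ using hmem2
  -- determinant nonzero
  have hwcard : Fintype.card (Fin r) = Module.finrank ℚ (Fin r → ℚ) := by
    rw [Fintype.card_fin, Module.finrank_fin_fun]
  have hw_span : Submodule.span ℚ (Set.range w) = ⊤ := by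
    apply Submodule.eq_top_of_finrank_eq
    rw [finrank_span_eq_card hw_ind, Fintype.card_fin, Module.finrank_fin_fun]
  have hunit : IsUnit ((Pi.basisFun ℚ (Fin r)).det w) :=
    (Module.Basis.is_basis_iff_det (Pi.basisFun ℚ (Fin r))).mp ⟨hw_ind, hw_span⟩
  have hmat : (Pi.basisFun ℚ (Fin r)).toMatrix w = (A.submatrix σ ρ).map (Int.cast : ℤ → ℚ) := by
    ext i j
    rw [Module.Basis.toMatrix_apply, Pi.basisFun_repr]
    have h1 : w j i = Bq.transpose (ρ j) i := (congrFun (hρ j) i).symm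
    rw [h1]
    show Bq i (ρ j) = ((A (σ i) (ρ j) : ℚ))
    show v i (ρ j) = _
    rw [hvσ]
  have hdetQ : ((A.submatrix σ ρ).map (Int.cast : ℤ → ℚ)).det ≠ 0 := by
    rw [← hmat, ← Module.Basis.det_apply]
    exact hunit.ne_zero
  refine ⟨r, σ, ρ, hrn, ?_, hspan⟩
  intro h0
  apply hdetQ
  have hmd : ((A.submatrix σ ρ).map (Int.cast : ℤ → ℚ)).det = ((A.submatrix σ ρ).det : ℚ) :=
    (RingHom.map_det (Int.castRingHom ℚ) (A.submatrix σ ρ)).symm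
  rw [hmd, h0, Int.cast_zero]

/-- For a non-zero `m × n` integer matrix `A` with `‖A‖ = N` the maximal
absolute value of its entries, the exponent `τ` of the torsion subgroup of
`M = ℤⁿ / (row span of A)` satisfies `τ ≤ n^(n/2) · Nⁿ`, and consequently
`log₂ τ ≤ n · log₂ (n · N)`. -/
theorem torsion_exponent_bound (m n : ℕ) (A : Matrix (Fin m) (Fin n) ℤ) (hA : A ≠ 0)
    (N : ℕ) (hN : N = Finset.univ.sup fun p : Fin m × Fin n => (A p.1 p.2).natAbs) :
    ((AddMonoid.exponent
        ↥(Submodule.torsion ℤ ((Fin n → ℤ) ⧸ Submodule.span ℤ (Set.range A)))) : ℝ) ≤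
      (n : ℝ) ^ ((n : ℝ) / 2) * (N : ℝ) ^ n ∧
    Real.logb 2
        ((AddMonoid.exponent
          ↥(Submodule.torsion ℤ ((Fin n → ℤ) ⧸ Submodule.span ℤ (Set.range A)))) : ℝ) ≤
      (n : ℝ) * Real.logb 2 ((n : ℝ) * (N : ℝ)) := by
  classical
  obtain ⟨i0, j0, hij⟩ : ∃ i j, A i j ≠ 0 := by
    by_contra h
    push_neg at h
    exact hA (by ext i j; exact h i j)
  have hn1 : 1 ≤ n := j0.pos
  have hN1 : 1 ≤ N := by
    have h1 := Finset.le_sup (f := fun p : Fin m × Fin n => (A p.1 p.2).natAbs)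
      (Finset.mem_univ (i0, j0))
    rw [← hN] at h1
    exact le_trans (Int.natAbs_pos.mpr hij) h1
  obtain ⟨r, σ, ρ, hrn, hdet0, hspan⟩ := exists_minor A hA
  set D := (A.submatrix σ ρ).det with hD
  set T := Submodule.torsion ℤ ((Fin n → ℤ) ⧸ Submodule.span ℤ (Set.range A)) with hT
  set τ := AddMonoid.exponent ↥T with hτ
  -- D annihilates the torsion subgroup
  have hann : ∀ t : ↥T, D.natAbs • t = 0 := by
    rintro ⟨y, hy⟩
    have hy2 := hy
    obtain ⟨a, ha⟩ := hy2
    obtain ⟨x, rfl⟩ := Submodule.Quotient.mk_surjective _ y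
    have hax : (a : ℤ) • x ∈ Submodule.span ℤ (Set.range A) := by
      rw [← Submodule.Quotient.mk_eq_zero, Submodule.Quotient.mk_smul]
      rwa [Submonoid.smul_def] at ha
    have ha0 : (a : ℤ) ≠ 0 := nonZeroDivisors.coe_ne_zero a
    have hDx := annihilate A σ ρ hspan x a ha0 hax
    have hmk : D • (Submodule.Quotient.mk x :
        (Fin n → ℤ) ⧸ Submodule.span ℤ (Set.range A)) = 0 := by
      rw [← Submodule.Quotient.mk_smul, Submodule.Quotient.mk_eq_zero]
      exact hDx
    refine Subtype.ext ?_
    have hcoe : ((D.natAbs • (⟨Submodule.Quotient.mk x, hy⟩ : ↥T) : ↥T) :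
        (Fin n → ℤ) ⧸ Submodule.span ℤ (Set.range A)) =
        D.natAbs • (Submodule.Quotient.mk x) := map_nsmul T.subtype _ _
    rw [hcoe, ← natCast_zsmul]
    rcases Int.natAbs_eq D with h | h
    · rw [← h, hmk]; rfl
    · have h' : (D.natAbs : ℤ) = -D := by omega
      rw [h', neg_smul, hmk, neg_zero]; rfl
  have hdvd : τ ∣ D.natAbs := AddMonoid.exponent_dvd_of_forall_nsmul_eq_zero hann
  have hτle : τ ≤ D.natAbs := Nat.le_of_dvd (Int.natAbs_pos.mpr hdet0) hdvd
  have hτ0 : τ ≠ 0 := by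
    intro h
    rw [h] at hdvd
    have := Nat.eq_zero_of_zero_dvd hdvd
    exact absurd this (Int.natAbs_pos.mpr hdet0).ne'
  -- Hadamard bound on D
  have hmapdet : ((A.submatrix σ ρ).map (Int.cast : ℤ → ℝ)).det = (D : ℝ) :=
    (RingHom.map_det (Int.castRingHom ℝ) (A.submatrix σ ρ)).symm
  have hb : ∀ i j, |((A.submatrix σ ρ).map (Int.cast : ℤ → ℝ)) i j| ≤ (N : ℝ) := by
    intro i j
    have h1 : (A (σ i) (ρ j)).natAbs ≤ N := by
      rw [hN]
      exact Finset.le_sup (f := fun p : Fin m × Fin n => (A p.1 p.2).natAbs)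
        (Finset.mem_univ (σ i, ρ j))
    have h2 : |((A (σ i) (ρ j) : ℤ) : ℝ)| = ((A (σ i) (ρ j)).natAbs : ℝ) := by
      rw [Nat.cast_natAbs, Int.cast_abs]
    show |((A (σ i) (ρ j) : ℤ) : ℝ)| ≤ (N : ℝ)
    rw [h2]
    exact_mod_cast h1
  have hhad : |(D : ℝ)| ≤ (Real.sqrt r * N) ^ r := by
    have := hadamard_det_bound ((A.submatrix σ ρ).map (Int.cast : ℤ → ℝ))
      (by positivity) hb
    rwa [hmapdet] at this
  have hsq1 : (1 : ℝ) ≤ Real.sqrt n := by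
    rw [show (1 : ℝ) = Real.sqrt 1 by simp]
    exact Real.sqrt_le_sqrt (by exact_mod_cast hn1)
  have hN1' : (1 : ℝ) ≤ (N : ℝ) := by exact_mod_cast hN1
  have hτR : (τ : ℝ) ≤ (Real.sqrt n * N) ^ n := by
    calc (τ : ℝ) ≤ (D.natAbs : ℝ) := by exact_mod_cast hτle
      _ = |(D : ℝ)| := by rw [Nat.cast_natAbs, Int.cast_abs]
      _ ≤ (Real.sqrt r * N) ^ r := hhad
      _ ≤ (Real.sqrt n * N) ^ r := by
          apply pow_le_pow_left₀ (by positivity)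
          exact mul_le_mul_of_nonneg_right (Real.sqrt_le_sqrt (by exact_mod_cast hrn))
            (by positivity)
      _ ≤ (Real.sqrt n * N) ^ n := by
          apply pow_le_pow_right₀ ?_ hrn
          nlinarith
  have hEq : (Real.sqrt n * (N : ℝ)) ^ n = (n : ℝ) ^ ((n : ℝ) / 2) * (N : ℝ) ^ n := by
    rw [mul_pow]
    congr 1
    rw [Real.sqrt_eq_rpow, ← Real.rpow_natCast ((n : ℝ) ^ ((1 : ℝ) / 2)) n,
      ← Real.rpow_mul (by positivity)]
    congr 1
    ring
  have hτpos : (0 : ℝ) < (τ : ℝ) := by exact_mod_cast Nat.pos_of_ne_zero hτ0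
  constructor
  · rw [← hEq]; exact hτR
  · have hle2 : (τ : ℝ) ≤ ((n : ℝ) * N) ^ n := by
      refine hτR.trans ?_
      apply pow_le_pow_left₀ (by positivity)
      apply mul_le_mul_of_nonneg_right _ (by positivity)
      rw [Real.sqrt_le_left (by positivity)]
      nlinarith [hn1, (by exact_mod_cast hn1 : (1:ℝ) ≤ (n:ℝ))]
    have hlog := Real.logb_le_logb_of_le (b := 2) (by norm_num) hτpos hle2
    rwa [Real.logb_pow] at hlog
end

section
/- Let R be a commutative ring which is generated as a ℤ-module by elements g₀, …, g_n, let A = (a_{ℓk}) be an m×(n+1) integer matrix whose rows generate the syzygy module Syz_ℤ(g₀,…,g_n) = {(v₀,…,v_n) ∈ ℤ^{n+1} : v₀g₀ + ⋯ + v_ng_n = 0}, and let c_{ijk} ∈ ℤ be structure constants satisfying g_i·g_j = ∑_{k=0}^{n} c_{ijk} g_k for all i, j = 0,…,n. Let f₁,…,f_p ∈ R with f_k = ∑_{j=0}^{n} b_{kj} g_j for integers b_{kj}. Then for any integers d_{ki} (k = 1,…,p, i = 0,…,n), the elements h_k = ∑_{i=0}^{n} d_{ki} g_i satisfy f₁h₁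 + ⋯ + f_p h_p = 0 in R if and only if there exist integers w₁,…,w_m such that for every ℓ = 0,…,n one has ∑_{k=1}^{p} ∑_{i=0}^{n} ∑_{j=0}^{n} d_{ki} b_{kj} c_{ijℓ} = ∑_{j=1}^{m} w_j a_{jℓ}. -/
/-- For an explicitly given finite `ℤ`-algebra `R` (generators `g₀,…,gₙ` of the
`ℤ`-module `R`, a matrix `A` whose rows generate the syzygy module, and structure constants
`c i j k`), a tuple `(h₁,…,h_p)` with `h_k = ∑ d k i • g i` solves the linear equation
`f₁·h₁ + ⋯ + f_p·h_p = 0` (where `f_k = ∑ b k j • g j`) if and only if there are integers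
`w₁,…,w_m` with `∑_{k,i,j} d k i · b k j · c i j ℓ = ∑_j w j · a j ℓ` for all `ℓ`. -/
theorem solving_linear_systems (R : Type*) [CommRing R] (n m p : ℕ)
    (g : Fin (n + 1) → R) (hg : Submodule.span ℤ (Set.range g) = ⊤)
    (A : Matrix (Fin m) (Fin (n + 1)) ℤ)
    (hA : ∀ v : Fin (n + 1) → ℤ,
      (∑ i, v i • g i = 0) ↔ ∃ w : Fin m → ℤ, v = ∑ j, w j • A j)
    (c : Fin (n + 1) → Fin (n + 1) → Fin (n + 1) → ℤ)
    (hc : ∀ i j, g i * g j = ∑ k, c i j k • g k)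
    (b : Fin p → Fin (n + 1) → ℤ) (d : Fin p → Fin (n + 1) → ℤ) :
    (∑ k, (∑ j, b k j • g j) * (∑ i, d k i • g i) = 0) ↔
      ∃ w : Fin m → ℤ, ∀ l : Fin (n + 1),
        (∑ k, ∑ i, ∑ j, d k i * b k j * c i j l) = ∑ j, w j * A j l := by
  have key : (∑ k, (∑ j, b k j • g j) * (∑ i, d k i • g i))
      = ∑ l, (∑ k, ∑ i, ∑ j, d k i * b k j * c i j l) • g l := by
    have : ∀ k, (∑ j, b k j • g j) * (∑ i, d k i • g i)
        = ∑ l, (∑ i, ∑ j, d k i * b k j * c i j l) • g l := by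
      intro k
      calc (∑ j, b k j • g j) * (∑ i, d k i • g i)
          = ∑ i, ∑ j, (d k i * b k j) • (g i * g j) := by
            rw [mul_comm, Finset.sum_mul]
            refine Finset.sum_congr rfl fun i _ => ?_
            rw [smul_mul_assoc, Finset.mul_sum, Finset.smul_sum]
            refine Finset.sum_congr rfl fun j _ => ?_
            rw [mul_smul_comm, smul_smul]
        _ = ∑ i, ∑ j, ∑ l, (d k i * b k j * c i j l) • g l := by
            refine Finset.sum_congr rfl fun i _ => Finset.sum_congr rfl fun j _ => ?_
            rw [hc, Finset.smul_sum]
            exact Finset.sum_congr rfl fun l _ => (smul_smul _ _ _)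
        _ = ∑ l, (∑ i, ∑ j, d k i * b k j * c i j l) • g l := by
            simp_rw [Finset.sum_smul]
            rw [Finset.sum_congr rfl fun i _ => (Finset.sum_comm ..), Finset.sum_comm]
    rw [Finset.sum_congr rfl fun k _ => this k, Finset.sum_comm]
    refine Finset.sum_congr rfl fun l _ => ?_
    rw [Finset.sum_smul]
  rw [key, hA]
  apply exists_congr
  intro w
  constructor
  · intro h l
    have := congrFun h l
    simpa [Finset.sum_apply, smul_eq_mul] using this
  · intro h
    funext l
    simpa [Finset.sum_apply, smul_eq_mul] using h l
end

section
/- Let M be a ℤ-module, let φ : M → M be a ℤ-linear endomorphism, and let i be a positive integer. Suppose the quotient Ker(φ^{i+1})/Ker(φ^i) is a torsion module, i.e., for every x ∈ Ker(φ^{i+1}) there exists a non-zero integer c with c·x ∈ Ker(φ^i). Then Ker(φ^{i+2})/Ker(φ^{i+1}) is also a torsion module: for every x ∈ Ker(φ^{i+2}) there exists a non-zero integer c with c·x ∈ Ker(φ^{i+1}). -/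
/-- Let `φ` be a `ℤ`-linear endomorphism of a `ℤ`-module `M` and `i` a positive
integer. If `Ker(φ^(i+1))/Ker(φ^i)` is a torsion module, then so is
`Ker(φ^(i+2))/Ker(φ^(i+1))`. -/
theorem ker_quotient_torsion_step (M : Type*) [AddCommGroup M] (φ : M →ₗ[ℤ] M)
    (i : ℕ) (hi : 0 < i)
    (h : ∀ x ∈ LinearMap.ker (φ ^ (i + 1)),
      ∃ c : ℤ, c ≠ 0 ∧ c • x ∈ LinearMap.ker (φ ^ i)) :
    ∀ x ∈ LinearMap.ker (φ ^ (i + 2)),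
      ∃ c : ℤ, c ≠ 0 ∧ c • x ∈ LinearMap.ker (φ ^ (i + 1)) := by
  intro x hx
  have hφx : φ x ∈ LinearMap.ker (φ ^ (i + 1)) := by
    simp only [LinearMap.mem_ker] at hx ⊢
    have : (φ ^ (i + 1)) (φ x) = (φ ^ (i + 2)) x := by
      simp only [pow_succ, pow_succ', Module.End.mul_apply]
    rw [this, hx]
  obtain ⟨c, hc, hcx⟩ := h (φ x) hφx
  refine ⟨c, hc, ?_⟩
  simp only [LinearMap.mem_ker] at hcx ⊢
  have : (φ ^ (i + 1)) (c • x) = (φ ^ i) (c • φ x) := by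
    rw [pow_succ]
    simp [Module.End.mul_apply, map_smul]
  rw [this, hcx]
end

section
/- (Macaulay's Basis Theorem for finite ℤ-algebras) Let P = ℤ[x₁,…,x_n], let σ be a term ordering on the monomials of P, and let I ⊆ P be an ideal such that P/I is finitely generated as a ℤ-module. Let L be the set of all monomials t such that there exists a non-zero polynomial f ∈ I whose σ-leading coefficient is 1 and whose σ-leading term is t (i.e., L is the set of monic leading monomials of I). Then the residue classes of the monomials in 𝕋ⁿ ∖ L generate the ℤ-module P/I. -/
/-- Macaulay's Basis Theorem for finite `ℤ`-algebras: Let `P = ℤ[x₁,…,xₙ]`,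
let `m` be a monomial (term) ordering, and let `I ⊆ P` be an ideal such that `P/I` is a
finitely generated `ℤ`-module. Let `L` be the set of monic leading monomials of `I`, i.e. the
set of monomials `t` for which some non-zero `f ∈ I` has leading term `t` with leading
coefficient `1` (equivalently, `coeff t f = 1` and every monomial in the support of `f` is
`≼[m] t`). Then the residue classes of the monomials not in `L` generate the `ℤ`-module
`P/I`. -/
theorem macaulay_basis_theorem (n : ℕ) (m : MonomialOrder (Fin n))
    (I : Ideal (MvPolynomial (Fin n) ℤ))
    (hfin : Module.Finite ℤ ((MvPolynomial (Fin n) ℤ) ⧸ I)) :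
    Submodule.span ℤ
      ((fun t : Fin n →₀ ℕ => Ideal.Quotient.mk I (MvPolynomial.monomial t 1)) ''
        {t : Fin n →₀ ℕ | ¬ ∃ f ∈ I, f ≠ 0 ∧ MvPolynomial.coeff t f = 1 ∧
          ∀ s ∈ f.support, m.toSyn s ≤ m.toSyn t}) = ⊤ := by
  set S := Submodule.span ℤ
      ((fun t : Fin n →₀ ℕ => Ideal.Quotient.mk I (MvPolynomial.monomial t 1)) ''
        {t : Fin n →₀ ℕ | ¬ ∃ f ∈ I, f ≠ 0 ∧ MvPolynomial.coeff t f = 1 ∧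
          ∀ s ∈ f.support, m.toSyn s ≤ m.toSyn t}) with hS
  have wf : WellFounded (fun s t : Fin n →₀ ℕ => m.toSyn s < m.toSyn t) :=
    InvImage.wf m.toSyn (wellFounded_lt (α := m.syn))
  have key : ∀ t : Fin n →₀ ℕ, Ideal.Quotient.mk I (MvPolynomial.monomial t 1) ∈ S := by
    intro t
    induction t using wf.induction with
    | _ t ih =>
      by_cases ht : ∃ f ∈ I, f ≠ 0 ∧ MvPolynomial.coeff t f = 1 ∧
          ∀ s ∈ f.support, m.toSyn s ≤ m.toSyn t
      · obtain ⟨f, hfI, hf0, hc, hle⟩ := ht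
        set g := MvPolynomial.monomial t (1 : ℤ) - f with hg
        have hmk : Ideal.Quotient.mk I (MvPolynomial.monomial t 1)
            = Ideal.Quotient.mk I g := by
          rw [hg, map_sub, Ideal.Quotient.eq_zero_iff_mem.2 hfI, sub_zero]
        rw [hmk]
        have hgeq : g = ∑ s ∈ g.support, MvPolynomial.monomial s (g.coeff s) :=
          (MvPolynomial.support_sum_monomial_coeff g).symm
        rw [hgeq, map_sum]
        apply Submodule.sum_mem
        intro s hs
        have hst : s ≠ t := by
          intro h
          subst h
          have : g.coeff s = 0 := by
            simp [hg, MvPolynomial.coeff_sub, MvPolynomial.coeff_monomial, hc]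
          exact (MvPolynomial.mem_support_iff.1 hs) this
        have hsf : s ∈ f.support := by
          rw [MvPolynomial.mem_support_iff]
          intro h
          apply MvPolynomial.mem_support_iff.1 hs
          simp [hg, MvPolynomial.coeff_sub, MvPolynomial.coeff_monomial,
            Ne.symm hst, h]
        have hlt : m.toSyn s < m.toSyn t :=
          lt_of_le_of_ne (hle s hsf) (fun h => hst (m.toSyn.injective h))
        have : MvPolynomial.monomial s (g.coeff s)
            = g.coeff s • MvPolynomial.monomial s (1 : ℤ) := by
          rw [MvPolynomial.smul_monomial, smul_eq_mul, mul_one]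
        rw [this, map_zsmul]
        exact Submodule.smul_mem _ _ (ih s hlt)
      · exact Submodule.subset_span ⟨t, ht, rfl⟩
  rw [eq_top_iff]
  intro x _
  obtain ⟨p, rfl⟩ := Ideal.Quotient.mk_surjective x
  have hpeq : p = ∑ s ∈ p.support, MvPolynomial.monomial s (p.coeff s) :=
    (MvPolynomial.support_sum_monomial_coeff p).symm
  rw [hpeq, map_sum]
  apply Submodule.sum_mem
  intro s _
  have : MvPolynomial.monomial s (p.coeff s)
      = p.coeff s • MvPolynomial.monomial s (1 : ℤ) := by
    rw [MvPolynomial.smul_monomial, smul_eq_mul, mul_one]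
  rw [this, map_zsmul]
  exact Submodule.smul_mem _ _ (key s)
end
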